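/- In ℝ², let L ≠ L̄ be two distinct lines spanning the plane, and let S, T, S₀, T₀ be four further lines with all relevant cross ratios defined. Then (b(L, S₀, L̄, T) − b(L, S₀, L̄, S)) / (b(L, S₀, L̄, T₀) − 1) = b(T, S, L, S₀) · b(T₀, L, T, S₀), where b denotes the classical projective cross ratio of four lines in ℝ². -/

import Mathlib

set_option maxHeartbeats 2000000


/-- The classical cross ratio (in an affine chart of `ℝP¹`). -/
noncomputable def crossRatio (x y z t : ℝ) : ℝ := ((x - y) * (z - t)) / ((x - t) * (z - y))

/-- The key identity of Proposition 8.3.2, used to compute the cusp gap function for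
Frenet curves, with the six lines `L, L̄, S, T, S₀, T₀` written in an affine chart. -/
theorem cusp_gap_crossRatio_identity (L Lb S T S₀ T₀ : ℝ)
    (hLLb : L ≠ Lb) (hLS : L ≠ S) (hLT : L ≠ T) (hLS₀ : L ≠ S₀) (hLT₀ : L ≠ T₀)
    (hLbS : Lb ≠ S) (hLbT : Lb ≠ T) (hLbS₀ : Lb ≠ S₀) (hLbT₀ : Lb ≠ T₀)
    (hST : S ≠ T) (hSS₀ : S ≠ S₀) (hST₀ : S ≠ T₀)
    (hTS₀ : T ≠ S₀) (hTT₀ : T ≠ T₀) (hS₀T₀ : S₀ ≠ T₀)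
    (hden : crossRatio L S₀ Lb T₀ - 1 ≠ 0) :
    (crossRatio L S₀ Lb T - crossRatio L S₀ Lb S) / (crossRatio L S₀ Lb T₀ - 1) =
      crossRatio T S L S₀ * crossRatio T₀ L T S₀ := by
  have h1 : L - Lb ≠ 0 := sub_ne_zero.mpr hLLb
  have h2 : L - S ≠ 0 := sub_ne_zero.mpr hLS
  have h3 : L - T ≠ 0 := sub_ne_zero.mpr hLT
  have h4 : L - S₀ ≠ 0 := sub_ne_zero.mpr hLS₀
  have h5 : L - T₀ ≠ 0 := sub_ne_zero.mpr hLT₀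
  have h6 : Lb - S ≠ 0 := sub_ne_zero.mpr hLbS
  have h7 : Lb - T ≠ 0 := sub_ne_zero.mpr hLbT
  have h8 : Lb - S₀ ≠ 0 := sub_ne_zero.mpr hLbS₀
  have h9 : Lb - T₀ ≠ 0 := sub_ne_zero.mpr hLbT₀
  have h10 : S - T ≠ 0 := sub_ne_zero.mpr hST
  have h11 : S - S₀ ≠ 0 := sub_ne_zero.mpr hSS₀
  have h12 : S - T₀ ≠ 0 := sub_ne_zero.mpr hST₀
  have h13 : T - S₀ ≠ 0 := sub_ne_zero.mpr hTS₀
  have h14 : T - T₀ ≠ 0 := sub_ne_zero.mpr hTT₀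
  have h15 : S₀ - T₀ ≠ 0 := sub_ne_zero.mpr hS₀T₀
  have g1 : Lb - L ≠ 0 := sub_ne_zero.mpr hLLb.symm
  have g2 : S - L ≠ 0 := sub_ne_zero.mpr hLS.symm
  have g3 : T - L ≠ 0 := sub_ne_zero.mpr hLT.symm
  have g4 : S₀ - L ≠ 0 := sub_ne_zero.mpr hLS₀.symm
  have g5 : T₀ - L ≠ 0 := sub_ne_zero.mpr hLT₀.symm
  have g6 : S - Lb ≠ 0 := sub_ne_zero.mpr hLbS.symm
  have g7 : T - Lb ≠ 0 := sub_ne_zero.mpr hLbT.symm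
  have g8 : S₀ - Lb ≠ 0 := sub_ne_zero.mpr hLbS₀.symm
  have g9 : T₀ - Lb ≠ 0 := sub_ne_zero.mpr hLbT₀.symm
  have g10 : T - S ≠ 0 := sub_ne_zero.mpr hST.symm
  have g11 : S₀ - S ≠ 0 := sub_ne_zero.mpr hSS₀.symm
  have g12 : T₀ - S ≠ 0 := sub_ne_zero.mpr hST₀.symm
  have g13 : S₀ - T ≠ 0 := sub_ne_zero.mpr hTS₀.symm
  have g14 : T₀ - T ≠ 0 := sub_ne_zero.mpr hTT₀.symm
  have g15 : T₀ - S₀ ≠ 0 := sub_ne_zero.mpr hS₀T₀.symm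
  have hmul : (L - T₀) * (Lb - S₀) ≠ 0 := mul_ne_zero h5 h8
  have hden' : (L - S₀) * (Lb - T₀) - (L - T₀) * (Lb - S₀) ≠ 0 := by
    intro h
    apply hden
    unfold crossRatio
    rw [div_sub_one hmul, div_eq_zero_iff]
    exact Or.inl (by linarith)
  unfold crossRatio
  rw [div_eq_iff (by rw [div_sub_one hmul]; exact div_ne_zero hden' hmul)]
  field_simp
  ring
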